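/- Let D ≥ 3 be a natural number and let k ∈ ℤ^D. Consider the lattice graph on ℤ^D (vertices n = (n_1,…,n_D), with n adjacent to n ± e_j for each coordinate vector e_j) with conductance identically 1, so the Laplacian is (Δv)(n) = Σ_{j=1}^{D} (2v(n) − v(n − e_j) − v(n + e_j)). Then there exists a square-summable function v : ℤ^D → ℝ (that is, Σ_n v(n)² < ∞) such that (Δv)(n) = δ_0(n) − δ_k(n) for every n ∈ ℤ^D. -/

import Mathlib

open scoped BigOperators
open MeasureTheory Complex Set

namespace LatticeAux

noncomputable section

local notation "π" => Real.pi

variable {D : ℕ}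

/-- the box `[-π,π]^D` -/
def Box (D : ℕ) : Set (Fin D → ℝ) := Set.univ.pi fun _ => Set.Icc (-π) π

/-- symbol of the discrete Laplacian -/
def sig (θ : Fin D → ℝ) : ℝ := ∑ j, 2 * (1 - Real.cos (θ j))

def dot (m : Fin D → ℤ) (θ : Fin D → ℝ) : ℝ := ∑ j, (m j : ℝ) * θ j

/-- character -/
def ch (m : Fin D → ℤ) (θ : Fin D → ℝ) : ℂ := Complex.exp ((dot m θ : ℂ) * Complex.I)

def ch1 (c : ℤ) (t : ℝ) : ℂ := Complex.exp (((c : ℝ) * t : ℝ) * Complex.I)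

/-- Green's function integrand -/
def gr (k : Fin D → ℤ) (θ : Fin D → ℝ) : ℂ := (1 - ch (-k) θ) / (sig θ : ℂ)

lemma integral_ch1 (c : ℤ) :
    ∫ t in Set.Icc (-π) π, ch1 c t = if c = 0 then ((2 * π : ℝ) : ℂ) else 0 := by
  have hle : (-π) ≤ π := by linarith [Real.pi_pos]
  rw [MeasureTheory.integral_Icc_eq_integral_Ioc, ← intervalIntegral.integral_of_le hle]
  by_cases hc : c = 0
  · subst hc
    simp only [ch1, Int.cast_zero, zero_mul, Complex.ofReal_zero, Complex.exp_zero, if_true]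
    rw [intervalIntegral.integral_const, real_smul]
    push_cast
    ring
  · rw [if_neg hc]
    have key : ∀ t : ℝ, ch1 c t = Complex.exp (((c : ℂ) * Complex.I) * t) := by
      intro t; rw [ch1]; push_cast; ring_nf
    rw [intervalIntegral.integral_congr (fun t _ => key t)]
    have hc' : (c : ℂ) * Complex.I ≠ 0 := by
      simp [Complex.I_ne_zero, Complex.ext_iff, hc]
    rw [integral_exp_mul_complex hc']
    have h1 : Complex.exp ((c : ℂ) * Complex.I * (π : ℝ)) = (-1) ^ c := by
      rw [show (c : ℂ) * Complex.I * (π : ℝ) = c * ((π : ℝ) * Complex.I) by ring,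
        Complex.exp_int_mul, Complex.exp_pi_mul_I]
    have h2 : Complex.exp ((c : ℂ) * Complex.I * ((-π : ℝ) : ℂ)) = (-1) ^ c := by
      rw [show (c : ℂ) * Complex.I * ((-π : ℝ) : ℂ) = ((-c : ℤ) : ℂ) * ((π : ℝ) * Complex.I) by
        push_cast; ring, Complex.exp_int_mul, Complex.exp_pi_mul_I, zpow_neg]
      rcases Int.even_or_odd c with h | h
      · rw [h.neg_one_zpow, inv_one]
      · rw [h.neg_one_zpow]; norm_num
    rw [h1]
    push_cast at h2 ⊢
    rw [h2, sub_self, zero_div]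



lemma boxMeasurable (D : ℕ) : MeasurableSet (Box D) :=
  MeasurableSet.univ_pi fun _ => measurableSet_Icc

lemma ch_eq_prod (m : Fin D → ℤ) (θ : Fin D → ℝ) : ch m θ = ∏ j, ch1 (m j) (θ j) := by
  rw [ch]
  simp only [ch1]
  rw [show ((dot m θ : ℝ) : ℂ) * Complex.I = ∑ j, (((m j : ℝ) * θ j : ℝ) : ℂ) * Complex.I by
    rw [dot]; push_cast; rw [Finset.sum_mul]]
  exact Complex.exp_sum _ _

lemma integral_ch (m : Fin D → ℤ) :
    ∫ θ in Box D, ch m θ = if m = 0 then (((2 * π) ^ D : ℝ) : ℂ) else 0 := by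
  have hind : (Box D).indicator (ch m)
      = fun θ => ∏ j, (Set.Icc (-π) π).indicator (ch1 (m j)) (θ j) := by
    funext θ
    by_cases hθ : θ ∈ Box D
    · rw [Set.indicator_of_mem hθ, ch_eq_prod]
      exact Finset.prod_congr rfl fun j _ =>
        (Set.indicator_of_mem (hθ j (Set.mem_univ j)) _).symm
    · rw [Set.indicator_of_notMem hθ]
      rw [Box, Set.mem_univ_pi] at hθ
      push_neg at hθ
      obtain ⟨j, hj⟩ := hθ
      exact (Finset.prod_eq_zero (Finset.mem_univ j)
        (Set.indicator_of_notMem hj _)).symm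
  rw [← MeasureTheory.integral_indicator (boxMeasurable D), hind]
  simp only [volume_pi]
  rw [MeasureTheory.integral_fintype_prod_eq_prod (ι := Fin D)
      (fun j t => (Set.Icc (-π) π).indicator (ch1 (m j)) t)]
  simp_rw [MeasureTheory.integral_indicator measurableSet_Icc, integral_ch1]
  by_cases hm : m = 0
  · subst hm
    simp only [Pi.zero_apply, if_true, Finset.prod_const, Finset.card_univ, Fintype.card_fin]
    push_cast
    ring
  · rw [if_neg hm]
    obtain ⟨j, hj⟩ := Function.ne_iff.1 hm
    exact Finset.prod_eq_zero (Finset.mem_univ j) (by rw [if_neg (by simpa using hj)])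

lemma volume_box (D : ℕ) : volume (Box D) = (ENNReal.ofReal (2 * π)) ^ D := by
  rw [Box, volume_pi_pi]
  simp [Real.volume_Icc, two_mul]

lemma boxFinite (D : ℕ) : IsFiniteMeasure (volume.restrict (Box D)) := by
  constructor
  rw [Measure.restrict_apply_univ, volume_box]
  exact ENNReal.pow_lt_top ENNReal.ofReal_lt_top

lemma cont_ch (m : Fin D → ℤ) : Continuous (ch m) := by
  unfold ch dot
  fun_prop

lemma cont_sig : Continuous (sig (D := D)) := by
  unfold sig
  fun_prop

lemma meas_gr (k : Fin D → ℤ) : Measurable (gr k) := by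
  unfold gr
  exact (measurable_const.sub (cont_ch _).measurable).div
    (Complex.measurable_ofReal.comp cont_sig.measurable)

lemma norm_ch (m : Fin D → ℤ) (θ : Fin D → ℝ) : ‖ch m θ‖ = 1 := by
  rw [ch, Complex.norm_exp_ofReal_mul_I]

lemma memLp_ch (m : Fin D → ℤ) : MemLp (ch m) 2 (volume.restrict (Box D)) := by
  haveI := boxFinite D
  exact MemLp.of_bound (cont_ch m).aestronglyMeasurable 1
    (Filter.Eventually.of_forall fun θ => (norm_ch m θ).le)
lemma sig_term_nonneg (t : ℝ) : 0 ≤ 2 * (1 - Real.cos t) := by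
  nlinarith [Real.cos_le_one t]

lemma sig_nonneg (θ : Fin D → ℝ) : 0 ≤ sig θ :=
  Finset.sum_nonneg fun j _ => sig_term_nonneg (θ j)

lemma one_sub_cos (t : ℝ) : 2 * (1 - Real.cos t) = 4 * Real.sin (t / 2) ^ 2 := by
  have h := Real.cos_sq (t / 2)
  have h2 := Real.sin_sq (t / 2)
  rw [show 2 * (t / 2) = t by ring] at h
  nlinarith

lemma sig_term_lower {t : ℝ} (h1 : -π ≤ t) (h2 : t ≤ π) :
    4 / π ^ 2 * t ^ 2 ≤ 2 * (1 - Real.cos t) := by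
  rw [one_sub_cos]
  have hπ := Real.pi_pos
  have key : 2 / π * (|t| / 2) ≤ Real.sin (|t| / 2) :=
    Real.mul_le_sin (by positivity) (by have := abs_le.2 ⟨h1, h2⟩; linarith)
  have hsq : Real.sin (t / 2) ^ 2 = Real.sin (|t| / 2) ^ 2 := by
    rcases abs_cases t with ⟨h, -⟩ | ⟨h, -⟩
    · rw [h]
    · rw [h, show -t / 2 = -(t/2) by ring, Real.sin_neg, neg_sq]
  have hnn : 0 ≤ 2 / π * (|t| / 2) := by positivity
  have hkey : (2 / π * (|t| / 2)) ^ 2 ≤ Real.sin (|t| / 2) ^ 2 :=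
    pow_le_pow_left₀ hnn key 2
  rw [hsq]
  calc 4 / π ^ 2 * t ^ 2 = 4 * (2 / π * (|t| / 2)) ^ 2 := by
        have : |t| ^ 2 = t ^ 2 := _root_.sq_abs t
        field_simp
        nlinarith [this]
    _ ≤ 4 * Real.sin (|t| / 2) ^ 2 := by nlinarith [hkey]

lemma norm_attained (hDpos : 0 < D) (θ : Fin D → ℝ) : ∃ j, ‖θ‖ = |θ j| := by
  obtain ⟨j, -, hj⟩ := Finset.exists_mem_eq_sup (Finset.univ : Finset (Fin D))
    ⟨⟨0, hDpos⟩, Finset.mem_univ _⟩ (fun i => ‖θ i‖₊)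
  exact ⟨j, by rw [Pi.norm_def, hj, coe_nnnorm, Real.norm_eq_abs]⟩

lemma sig_lower (hDpos : 0 < D) {θ : Fin D → ℝ} (hθ : θ ∈ Box D) :
    4 / π ^ 2 * ‖θ‖ ^ 2 ≤ sig θ := by
  obtain ⟨j, hj⟩ := norm_attained hDpos θ
  have hmem := hθ j (Set.mem_univ j)
  have h1 : 4 / π ^ 2 * ‖θ‖ ^ 2 ≤ 2 * (1 - Real.cos (θ j)) := by
    rw [hj, _root_.sq_abs]
    exact sig_term_lower hmem.1 hmem.2
  exact h1.trans (Finset.single_le_sum (fun i _ => sig_term_nonneg (θ i)) (Finset.mem_univ j))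

lemma sig_pos (hDpos : 0 < D) {θ : Fin D → ℝ} (hθ : θ ∈ Box D) (hne : θ ≠ 0) :
    0 < sig θ := by
  have h1 : 0 < ‖θ‖ := norm_pos_iff.2 hne
  have h2 := sig_lower hDpos hθ
  have hπ := Real.pi_pos
  have h3 : 0 < 4 / π ^ 2 * ‖θ‖ ^ 2 := by positivity
  linarith

lemma norm_one_sub_exp (x : ℝ) : ‖1 - Complex.exp ((x : ℂ) * Complex.I)‖ ≤ 2 * |x| := by
  rcases le_or_gt (|x|) 1 with h | h
  · have := Complex.norm_exp_sub_one_le (x := (x : ℂ) * Complex.I)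
      (by rwa [norm_mul, Complex.norm_I, mul_one, Complex.norm_real, Real.norm_eq_abs])
    rw [norm_sub_rev]
    simpa [Complex.norm_I] using this
  · calc ‖1 - Complex.exp ((x : ℂ) * Complex.I)‖
        ≤ ‖(1 : ℂ)‖ + ‖Complex.exp ((x : ℂ) * Complex.I)‖ := norm_sub_le _ _
    _ = 2 := by rw [norm_one, Complex.norm_exp_ofReal_mul_I]; norm_num
    _ ≤ 2 * |x| := by nlinarith

lemma dot_neg (m : Fin D → ℤ) (θ : Fin D → ℝ) : dot (-m) θ = -dot m θ := by
  unfold dot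
  rw [← Finset.sum_neg_distrib]
  exact Finset.sum_congr rfl fun j _ => by simp [Pi.neg_apply]

lemma abs_dot_le (m : Fin D → ℤ) (θ : Fin D → ℝ) :
    |dot m θ| ≤ (∑ j, |(m j : ℝ)|) * ‖θ‖ := by
  rw [Finset.sum_mul]
  refine (Finset.abs_sum_le_sum_abs _ _).trans (Finset.sum_le_sum fun j _ => ?_)
  rw [abs_mul]
  exact mul_le_mul_of_nonneg_left ((Real.norm_eq_abs (θ j)) ▸ norm_le_pi_norm θ j) (abs_nonneg _)

lemma norm_num_bound (k : Fin D → ℤ) (θ : Fin D → ℝ) :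
    ‖1 - ch (-k) θ‖ ≤ 2 * (∑ j, |(k j : ℝ)|) * ‖θ‖ := by
  have h1 : ‖1 - ch (-k) θ‖ ≤ 2 * |dot (-k) θ| := norm_one_sub_exp _
  rw [dot_neg, abs_neg] at h1
  refine h1.trans ?_
  rw [mul_assoc]
  exact mul_le_mul_of_nonneg_left (abs_dot_le k θ) (by norm_num)

lemma rpow_abs_le (t : ℝ) : |t| ^ (-(2:ℝ)/3) ≤ 2 * |t ^ (-(2:ℝ)/3)| := by
  rcases lt_trichotomy t 0 with h | h | h
  · have habs : |t| = -t := abs_of_neg h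
    have hpos : (0:ℝ) < -t := by linarith
    rw [Real.rpow_def_of_neg h, habs, Real.rpow_def_of_pos hpos, Real.log_neg_eq_log]
    have hcos : |Real.cos (-(2:ℝ)/3 * π)| = 1/2 := by
      rw [show (-(2:ℝ)/3 * π) = -(π - π/3) by ring, Real.cos_neg, Real.cos_pi_sub,
        Real.cos_pi_div_three, abs_neg]
      norm_num
    rw [abs_mul, hcos, _root_.abs_of_nonneg (Real.exp_nonneg _)]
    linarith
  · subst h
    rw [abs_zero, Real.zero_rpow (by norm_num), abs_zero]
    norm_num
  · rw [abs_of_pos h, _root_.abs_of_nonneg (Real.rpow_nonneg h.le _)]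
    linarith [Real.rpow_nonneg h.le (-(2:ℝ)/3)]
def sset (hD : 3 ≤ D) : Finset (Fin D) := {⟨0, by omega⟩, ⟨1, by omega⟩, ⟨2, by omega⟩}

lemma card_sset (hD : 3 ≤ D) : (sset hD).card = 3 := by
  rw [sset, Finset.card_insert_of_notMem (by simp [Fin.ext_iff]),
    Finset.card_insert_of_notMem (by simp [Fin.ext_iff]), Finset.card_singleton]

def FF (hD : 3 ≤ D) (i : Fin D) (t : ℝ) : ℝ :=
  if i ∈ sset hD then 2 * |t ^ (-(2:ℝ)/3)| else 1

lemma FF_nonneg (hD : 3 ≤ D) (i : Fin D) (t : ℝ) : 0 ≤ FF hD i t := by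
  rw [FF]; split <;> positivity

lemma FF_integrableOn (hD : 3 ≤ D) (i : Fin D) :
    IntegrableOn (FF hD i) (Set.Icc (-π) π) := by
  have hle : (-π) ≤ π := by linarith [Real.pi_pos]
  by_cases h : i ∈ sset hD
  · have hFF : FF hD i = fun t => 2 * |t ^ (-(2:ℝ)/3)| := funext fun t => if_pos h
    rw [hFF]
    have h1 : IntervalIntegrable (fun t : ℝ => t ^ (-(2:ℝ)/3)) volume (-π) π :=
      intervalIntegral.intervalIntegrable_rpow' (by norm_num)
    have h2 := ((intervalIntegrable_iff_integrableOn_Icc_of_le hle).1 h1.norm).const_mul 2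
    refine MeasureTheory.IntegrableOn.congr_fun h2 (fun t _ => ?_) measurableSet_Icc
    simp [Real.norm_eq_abs]
  · have hFF : FF hD i = fun _ => (1:ℝ) := funext fun t => if_neg h
    rw [hFF]
    exact integrableOn_const (by rw [Real.volume_Icc]; exact ENNReal.ofReal_ne_top)

lemma indicator_box_prod (f : Fin D → ℝ → ℝ) :
    (Box D).indicator (fun θ => ∏ i, f i (θ i))
      = fun θ => ∏ i, (Set.Icc (-π) π).indicator (f i) (θ i) := by
  funext θ
  by_cases hθ : θ ∈ Box D
  · rw [Set.indicator_of_mem hθ]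
    exact Finset.prod_congr rfl fun j _ =>
      (Set.indicator_of_mem (hθ j (Set.mem_univ j)) _).symm
  · rw [Set.indicator_of_notMem hθ]
    rw [Box, Set.mem_univ_pi] at hθ
    push_neg at hθ
    obtain ⟨j, hj⟩ := hθ
    exact (Finset.prod_eq_zero (Finset.mem_univ j) (Set.indicator_of_notMem hj _)).symm

lemma prod_FF_integrable (hD : 3 ≤ D) :
    Integrable (fun θ : Fin D → ℝ => ∏ i, FF hD i (θ i)) (volume.restrict (Box D)) := by
  refine (integrable_indicator_iff (boxMeasurable D)).1 ?_
  rw [indicator_box_prod]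
  exact Integrable.fintype_prod fun i =>
    (integrable_indicator_iff measurableSet_Icc).2 (FF_integrableOn hD i)

lemma gr_sq_bound (hD : 3 ≤ D) (k : Fin D → ℤ) {θ : Fin D → ℝ} (hθ : θ ∈ Box D)
    (hne : ∀ i, θ i ≠ 0) :
    ‖gr k θ‖ ^ 2 ≤ ((∑ j, |(k j : ℝ)|) * π ^ 2 / 2) ^ 2 * ∏ i, FF hD i (θ i) := by
  have hDpos : 0 < D := by omega
  have hθne : θ ≠ 0 := fun h => hne ⟨0, hDpos⟩ (by rw [h]; rfl)
  have hn : 0 < ‖θ‖ := norm_pos_iff.2 hθne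
  set K := ∑ j, |(k j : ℝ)| with hK
  have hK0 : 0 ≤ K := Finset.sum_nonneg fun j _ => abs_nonneg _
  have hπ := Real.pi_pos
  have step1 : ‖gr k θ‖ ≤ K * π ^ 2 / 2 * ‖θ‖⁻¹ := by
    rcases eq_or_lt_of_le (sig_nonneg θ) with hs | hs
    · rw [gr, ← hs]
      simp only [Complex.ofReal_zero, div_zero, norm_zero]
      positivity
    · rw [gr, norm_div]
      have hden : ‖((sig θ : ℝ) : ℂ)‖ = sig θ := by
        rw [Complex.norm_real, Real.norm_eq_abs, _root_.abs_of_pos hs]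
      rw [hden, div_le_iff₀ hs]
      have h4 := sig_lower hDpos hθ
      calc ‖1 - ch (-k) θ‖ ≤ 2 * K * ‖θ‖ := norm_num_bound k θ
        _ = K * π ^ 2 / 2 * ‖θ‖⁻¹ * (4 / π ^ 2 * ‖θ‖ ^ 2) := by field_simp; ring
        _ ≤ K * π ^ 2 / 2 * ‖θ‖⁻¹ * sig θ :=
          mul_le_mul_of_nonneg_left h4 (by positivity)
  have step2 : ‖gr k θ‖ ^ 2 ≤ (K * π ^ 2 / 2) ^ 2 * (‖θ‖ ^ 2)⁻¹ := by
    calc ‖gr k θ‖ ^ 2 ≤ (K * π ^ 2 / 2 * ‖θ‖⁻¹) ^ 2 :=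
          pow_le_pow_left₀ (norm_nonneg _) step1 2
      _ = (K * π ^ 2 / 2) ^ 2 * (‖θ‖ ^ 2)⁻¹ := by rw [mul_pow, ← inv_pow]
  refine step2.trans (mul_le_mul_of_nonneg_left ?_ (by positivity))
  have hprod : ∏ i, FF hD i (θ i) = ∏ i ∈ sset hD, 2 * |θ i ^ (-(2:ℝ)/3)| := by
    simp only [FF]
    rw [Finset.prod_ite_mem Finset.univ (sset hD) (fun i => 2 * |θ i ^ (-(2:ℝ)/3)|),
      Finset.univ_inter]
  have hP : ∏ i ∈ sset hD, |θ i| ^ ((2:ℝ)/3) ≤ ‖θ‖ ^ 2 := by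
    calc ∏ i ∈ sset hD, |θ i| ^ ((2:ℝ)/3)
        ≤ ∏ _i ∈ sset hD, ‖θ‖ ^ ((2:ℝ)/3) :=
          Finset.prod_le_prod (fun i _ => Real.rpow_nonneg (abs_nonneg _) _)
            (fun i _ => Real.rpow_le_rpow (abs_nonneg _)
              (Real.norm_eq_abs (θ i) ▸ norm_le_pi_norm θ i) (by norm_num))
      _ = (‖θ‖ ^ ((2:ℝ)/3)) ^ (3:ℕ) := by rw [Finset.prod_const, card_sset]
      _ = ‖θ‖ ^ 2 := by
          rw [← Real.rpow_natCast (‖θ‖ ^ ((2:ℝ)/3)) 3, ← Real.rpow_mul (norm_nonneg _)]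
          norm_num
  have hPpos : 0 < ∏ i ∈ sset hD, |θ i| ^ ((2:ℝ)/3) :=
    Finset.prod_pos fun i _ => Real.rpow_pos_of_pos (abs_pos.2 (hne i)) _
  have hinv : (‖θ‖ ^ 2)⁻¹ ≤ ∏ i ∈ sset hD, |θ i| ^ (-(2:ℝ)/3) := by
    have h1 : (‖θ‖ ^ 2)⁻¹ ≤ (∏ i ∈ sset hD, |θ i| ^ ((2:ℝ)/3))⁻¹ :=
      inv_anti₀ hPpos hP
    refine h1.trans_eq ?_
    rw [← Finset.prod_inv_distrib]
    refine Finset.prod_congr rfl fun i _ => ?_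
    rw [← Real.rpow_neg (abs_nonneg _)]
    norm_num
  rw [hprod]
  exact hinv.trans (Finset.prod_le_prod
    (fun i _ => Real.rpow_nonneg (abs_nonneg _) _) (fun i _ => rpow_abs_le (θ i)))

lemma ae_ne_zero (D : ℕ) : ∀ᵐ θ ∂(volume.restrict (Box D)), ∀ i, θ i ≠ 0 := by
  rw [MeasureTheory.ae_all_iff]
  intro i
  refine ae_restrict_of_ae ?_
  have hnull : volume {θ : Fin D → ℝ | θ i = 0} = 0 := by
    rw [volume_pi]
    exact Measure.pi_hyperplane (μ := fun _ : Fin D => (volume : Measure ℝ)) i 0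
  rw [MeasureTheory.ae_iff]
  refine measure_mono_null (fun θ hθ => ?_) hnull
  simpa using hθ

lemma memLp_gr (hD : 3 ≤ D) (k : Fin D → ℤ) : MemLp (gr k) 2 (volume.restrict (Box D)) := by
  haveI := boxFinite D
  rw [memLp_two_iff_integrable_sq_norm (meas_gr k).aestronglyMeasurable]
  refine Integrable.mono'
    ((prod_FF_integrable hD).const_mul (((∑ j, |(k j : ℝ)|) * π ^ 2 / 2) ^ 2))
    (((meas_gr k).norm.pow_const 2).aestronglyMeasurable) ?_
  filter_upwards [ae_restrict_mem (boxMeasurable D), ae_ne_zero D] with θ hθ hni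
  rw [Real.norm_eq_abs, _root_.abs_of_nonneg (by positivity)]
  exact gr_sq_bound hD k hθ hni
/-- the Fourier coefficients of the Green's function -/
def Iv (k m : Fin D → ℤ) : ℂ := ∫ θ in Box D, gr k θ * ch m θ

lemma dot_add (a b : Fin D → ℤ) (θ : Fin D → ℝ) : dot (a + b) θ = dot a θ + dot b θ := by
  unfold dot
  rw [← Finset.sum_add_distrib]
  exact Finset.sum_congr rfl fun j _ => by push_cast [Pi.add_apply]; ring

lemma dot_single (j : Fin D) (θ : Fin D → ℝ) : dot (Pi.single j 1) θ = θ j := by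
  unfold dot
  rw [Finset.sum_eq_single j]
  · simp
  · intro i _ hij
    rw [Pi.single_eq_of_ne hij]
    simp
  · intro h; exact absurd (Finset.mem_univ j) h

lemma ch_add (a b : Fin D → ℤ) (θ : Fin D → ℝ) : ch (a + b) θ = ch a θ * ch b θ := by
  rw [ch, ch, ch, dot_add, ← Complex.exp_add]
  congr 1
  push_cast
  ring

lemma conj_ch (m : Fin D → ℤ) (θ : Fin D → ℝ) :
    (starRingEnd ℂ) (ch m θ) = ch (-m) θ := by
  rw [ch, ch, ← Complex.exp_conj]
  congr 1
  rw [map_mul, Complex.conj_ofReal, Complex.conj_I, dot_neg]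
  push_cast
  ring

lemma ch_sub_single (n : Fin D → ℤ) (j : Fin D) (θ : Fin D → ℝ) :
    ch (n - Pi.single j 1) θ = ch n θ * Complex.exp (((-θ j : ℝ) : ℂ) * Complex.I) := by
  rw [show n - Pi.single j 1 = n + -(Pi.single j 1) by ring, ch_add]
  congr 1
  rw [ch, dot_neg, dot_single]

lemma ch_add_single (n : Fin D → ℤ) (j : Fin D) (θ : Fin D → ℝ) :
    ch (n + Pi.single j 1) θ = ch n θ * Complex.exp (((θ j : ℝ) : ℂ) * Complex.I) := by
  rw [ch_add]
  congr 1
  rw [ch, dot_single]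

lemma integrable_ch (m : Fin D → ℤ) : Integrable (ch m) (volume.restrict (Box D)) := by
  haveI := boxFinite D
  exact memLp_one_iff_integrable.1 ((memLp_ch m).mono_exponent one_le_two)

lemma integrable_gr_mul (hD : 3 ≤ D) (k : Fin D → ℤ) (f : (Fin D → ℝ) → ℂ)
    (hf : Continuous f) (C : ℝ) (hC : ∀ θ, ‖f θ‖ ≤ C) :
    Integrable (fun θ => gr k θ * f θ) (volume.restrict (Box D)) := by
  haveI := boxFinite D
  have hg : Integrable (gr k) (volume.restrict (Box D)) :=
    memLp_one_iff_integrable.1 ((memLp_gr hD k).mono_exponent one_le_two)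
  exact (hg.bdd_mul hf.aestronglyMeasurable (Filter.Eventually.of_forall hC)).congr
    (Filter.Eventually.of_forall fun θ => mul_comm (f θ) (gr k θ))

/-- local multiplier -/
def qq (j : Fin D) (θ : Fin D → ℝ) : ℂ :=
  2 - Complex.exp (((-θ j : ℝ) : ℂ) * Complex.I) - Complex.exp (((θ j : ℝ) : ℂ) * Complex.I)

lemma cont_qq (j : Fin D) : Continuous (qq (D := D) j) := by
  unfold qq
  fun_prop


lemma sum_qq (θ : Fin D → ℝ) : ∑ j, qq j θ = ((sig θ : ℝ) : ℂ) := by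
  rw [sig]
  push_cast
  refine Finset.sum_congr rfl fun j _ => ?_
  rw [qq, Complex.exp_mul_I, Complex.exp_mul_I]
  push_cast
  rw [Complex.cos_neg, Complex.sin_neg, ← Complex.ofReal_cos]
  ring

lemma lap_key (hD : 3 ≤ D) (k n : Fin D → ℤ) :
    ∑ j : Fin D, (2 * Iv k n - Iv k (n - Pi.single j 1) - Iv k (n + Pi.single j 1))
      = (((2 * π) ^ D * ((if n = 0 then (1:ℝ) else 0) - (if n = k then (1:ℝ) else 0)) : ℝ) : ℂ) := by
  have hDpos : 0 < D := by omega
  have hIm : ∀ m, Integrable (fun θ => gr k θ * ch m θ) (volume.restrict (Box D)) :=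
    fun m => integrable_gr_mul hD k (ch m) (cont_ch m) 1 fun θ => (norm_ch m θ).le
  have e1 : ∀ j : Fin D, 2 * Iv k n - Iv k (n - Pi.single j 1) - Iv k (n + Pi.single j 1)
      = ∫ θ in Box D, gr k θ * (ch n θ * qq j θ) := by
    intro j
    rw [Iv, Iv, Iv]
    have h1 : ∫ θ in Box D, gr k θ * (ch n θ * qq j θ)
        = ∫ θ in Box D, (2 * (gr k θ * ch n θ) - gr k θ * ch (n - Pi.single j 1) θ
            - gr k θ * ch (n + Pi.single j 1) θ) :=
      MeasureTheory.integral_congr_ae (Filter.Eventually.of_forall fun θ => by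
        show gr k θ * (ch n θ * qq j θ) = 2 * (gr k θ * ch n θ)
            - gr k θ * ch (n - Pi.single j 1) θ - gr k θ * ch (n + Pi.single j 1) θ
        rw [ch_sub_single, ch_add_single, qq]; ring)
    have h2 : Integrable (fun θ => 2 * (gr k θ * ch n θ)
        - gr k θ * ch (n - Pi.single j 1) θ) (volume.restrict (Box D)) :=
      ((hIm n).const_mul 2).sub (hIm _)
    rw [h1, MeasureTheory.integral_sub h2 (hIm _),
      MeasureTheory.integral_sub ((hIm n).const_mul 2) (hIm _), integral_const_mul]
  have hIq : ∀ j : Fin D, Integrable (fun θ => gr k θ * (ch n θ * qq j θ))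
      (volume.restrict (Box D)) := by
    intro j
    refine integrable_gr_mul hD k _ ((cont_ch n).mul (cont_qq j)) 4 fun θ => ?_
    rw [norm_mul, norm_ch, one_mul]
    calc ‖qq j θ‖ ≤ ‖(2:ℂ) - Complex.exp (((-θ j : ℝ) : ℂ) * Complex.I)‖
          + ‖Complex.exp (((θ j : ℝ) : ℂ) * Complex.I)‖ := norm_sub_le _ _
      _ ≤ (‖(2:ℂ)‖ + ‖Complex.exp (((-θ j : ℝ) : ℂ) * Complex.I)‖) + 1 := by
          rw [Complex.norm_exp_ofReal_mul_I]
          exact add_le_add (norm_sub_le _ _) le_rfl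
      _ ≤ 4 := by
          rw [Complex.norm_exp_ofReal_mul_I]
          norm_num
  calc ∑ j : Fin D, (2 * Iv k n - Iv k (n - Pi.single j 1) - Iv k (n + Pi.single j 1))
      = ∑ j : Fin D, ∫ θ in Box D, gr k θ * (ch n θ * qq j θ) :=
        Finset.sum_congr rfl fun j _ => e1 j
    _ = ∫ θ in Box D, ∑ j : Fin D, gr k θ * (ch n θ * qq j θ) :=
        (MeasureTheory.integral_finset_sum _ fun j _ => hIq j).symm
    _ = ∫ θ in Box D, gr k θ * (ch n θ * ((sig θ : ℝ) : ℂ)) := by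
        refine MeasureTheory.integral_congr_ae (Filter.Eventually.of_forall fun θ => ?_)
        show ∑ j : Fin D, gr k θ * (ch n θ * qq j θ) = gr k θ * (ch n θ * ((sig θ : ℝ) : ℂ))
        rw [← sum_qq θ, Finset.mul_sum, Finset.mul_sum]
    _ = ∫ θ in Box D, (ch n θ - ch (n + -k) θ) := by
        refine MeasureTheory.integral_congr_ae ?_
        filter_upwards [ae_ne_zero D, MeasureTheory.ae_restrict_mem (boxMeasurable D)]
          with θ h0 hθ
        have hθne : θ ≠ 0 := fun h => h0 ⟨0, hDpos⟩ (by rw [h]; rfl)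
        have hs : (sig θ : ℂ) ≠ 0 :=
          Complex.ofReal_ne_zero.2 (sig_pos hDpos hθ hθne).ne'
        rw [gr, ch_add]
        field_simp
    _ = (∫ θ in Box D, ch n θ) - ∫ θ in Box D, ch (n + -k) θ :=
        MeasureTheory.integral_sub (integrable_ch n) (integrable_ch _)
    _ = _ := by
        rw [integral_ch, integral_ch, show n + -k = n - k by ring]
        have hnk : (n - k = 0) ↔ (n = k) := sub_eq_zero
        simp only [hnk]
        push_cast
        split_ifs <;> norm_num
lemma summable_sq (hD : 3 ≤ D) (k : Fin D → ℤ) :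
    Summable fun n : Fin D → ℤ => ((((2 * π) ^ D : ℝ))⁻¹ * (Iv k n).re) ^ 2 := by
  haveI := boxFinite D
  have h2pi : (0:ℝ) < (2 * π) ^ D := by positivity
  set c0 : ℝ := Real.sqrt ((2 * π) ^ D) with hc0
  have hc0pos : 0 < c0 := Real.sqrt_pos.2 h2pi
  have hc0sq : c0 ^ 2 = (2 * π) ^ D := Real.sq_sqrt h2pi.le
  set E : (Fin D → ℤ) → Lp ℂ 2 (volume.restrict (Box D)) :=
    fun m => (memLp_ch m).toLp (ch m) with hE
  have hinnerE : ∀ a b : Fin D → ℤ,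
      (inner ℂ (E a) (E b) : ℂ) = if a = b then (((2 * π) ^ D : ℝ) : ℂ) else 0 := by
    intro a b
    rw [hE, MeasureTheory.L2.inner_def]
    have hae : ∀ᵐ θ ∂(volume.restrict (Box D)),
        (inner ℂ ((((memLp_ch a).toLp (ch a)) : Lp ℂ 2 (volume.restrict (Box D))) θ)
            ((((memLp_ch b).toLp (ch b)) : Lp ℂ 2 (volume.restrict (Box D))) θ) : ℂ)
          = ch (b - a) θ := by
      filter_upwards [(memLp_ch a).coeFn_toLp, (memLp_ch b).coeFn_toLp] with θ h1 h2
      rw [h1, h2, RCLike.inner_apply, conj_ch, ← ch_add, ← sub_eq_add_neg]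
    rw [MeasureTheory.integral_congr_ae hae, integral_ch]
    simp only [sub_eq_zero]
    by_cases hab : a = b
    · rw [if_pos hab, if_pos hab.symm]
    · rw [if_neg hab, if_neg (Ne.symm hab)]
  set F : (Fin D → ℤ) → Lp ℂ 2 (volume.restrict (Box D)) :=
    fun m => ((c0⁻¹ : ℝ) : ℂ) • E m with hF
  have hON : Orthonormal ℂ F := by
    rw [orthonormal_iff_ite]
    intro a b
    rw [hF]
    simp only
    rw [inner_smul_left, inner_smul_right, hinnerE, Complex.conj_ofReal]
    by_cases hab : a = b
    · rw [if_pos hab, if_pos hab, ← Complex.ofReal_mul, ← Complex.ofReal_mul, ← hc0sq]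
      norm_cast
      field_simp
    · rw [if_neg hab, if_neg hab]
      simp
  set G : Lp ℂ 2 (volume.restrict (Box D)) := (memLp_gr hD k).toLp (gr k) with hG
  have hFG : ∀ m : Fin D → ℤ, (inner ℂ (F m) G : ℂ) = ((c0⁻¹ : ℝ) : ℂ) * Iv k (-m) := by
    intro m
    rw [hF]
    simp only
    rw [inner_smul_left, Complex.conj_ofReal]
    congr 1
    rw [hG, hE, MeasureTheory.L2.inner_def]
    have hae : ∀ᵐ θ ∂(volume.restrict (Box D)),
        (inner ℂ ((((memLp_ch m).toLp (ch m)) : Lp ℂ 2 (volume.restrict (Box D))) θ)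
            ((((memLp_gr hD k).toLp (gr k)) : Lp ℂ 2 (volume.restrict (Box D))) θ) : ℂ)
          = gr k θ * ch (-m) θ := by
      filter_upwards [(memLp_ch m).coeFn_toLp, (memLp_gr hD k).coeFn_toLp] with θ h1 h2
      rw [h1, h2, RCLike.inner_apply, conj_ch]
    rw [MeasureTheory.integral_congr_ae hae]
    rfl
  have hsum : Summable fun m : Fin D → ℤ => ‖(inner ℂ (F m) G : ℂ)‖ ^ 2 :=
    hON.inner_products_summable (x := G)
  have hsum2 : Summable fun n : Fin D → ℤ => ‖(inner ℂ (F (-n)) G : ℂ)‖ ^ 2 :=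
    hsum.comp_injective neg_injective
  refine Summable.of_nonneg_of_le (fun n => sq_nonneg _) (fun n => ?_)
    (hsum2.mul_left (((((2 * π) ^ D : ℝ))⁻¹) ^ 2 * c0 ^ 2))
  have h1 : (inner ℂ (F (-n)) G : ℂ) = ((c0⁻¹ : ℝ) : ℂ) * Iv k n := by
    rw [hFG, neg_neg]
  have h2 : ‖(inner ℂ (F (-n)) G : ℂ)‖ = c0⁻¹ * ‖Iv k n‖ := by
    rw [h1, norm_mul, Complex.norm_real, Real.norm_eq_abs, _root_.abs_of_pos (by positivity)]
  have h3 : (Iv k n).re ^ 2 ≤ ‖Iv k n‖ ^ 2 := by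
    have h4 := Complex.abs_re_le_norm (Iv k n)
    calc (Iv k n).re ^ 2 = |(Iv k n).re| ^ 2 := (_root_.sq_abs _).symm
      _ ≤ ‖Iv k n‖ ^ 2 :=
        pow_le_pow_left₀ (abs_nonneg _) h4 2
  calc ((((2 * π) ^ D : ℝ))⁻¹ * (Iv k n).re) ^ 2
      = (((2 * π) ^ D : ℝ))⁻¹ ^ 2 * (Iv k n).re ^ 2 := by ring
    _ ≤ (((2 * π) ^ D : ℝ))⁻¹ ^ 2 * ‖Iv k n‖ ^ 2 :=
        mul_le_mul_of_nonneg_left h3 (by positivity)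
    _ = (((2 * π) ^ D : ℝ))⁻¹ ^ 2 * c0 ^ 2 * ‖(inner ℂ (F (-n)) G : ℂ)‖ ^ 2 := by
        rw [h2, mul_pow]
        field_simp
end

end LatticeAux
/-- On the lattice `ℤ^D` with `D ≥ 3` and conductance `1`, the potential equation
`Δv = δ_0 − δ_k` has a square-summable solution. -/
theorem lattice_potential_l2 (D : ℕ) (hD : 3 ≤ D) (k : Fin D → ℤ) :
    ∃ v : (Fin D → ℤ) → ℝ,
      Summable (fun n : Fin D → ℤ => (v n) ^ 2)
      ∧ ∀ n : Fin D → ℤ,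
          (∑ j : Fin D, (2 * v n - v (n - Pi.single j 1) - v (n + Pi.single j 1)))
            = (if n = 0 then 1 else 0) - (if n = k then 1 else 0) := by
  classical
  refine ⟨fun n => (((2 * Real.pi) ^ D : ℝ))⁻¹ * (LatticeAux.Iv k n).re,
    LatticeAux.summable_sq hD k, fun n => ?_⟩
  have hkey := LatticeAux.lap_key hD k n
  have h2pi : ((2 * Real.pi) ^ D : ℝ) ≠ 0 := by positivity
  have hL : ∀ j : Fin D,
      2 * ((((2 * Real.pi) ^ D : ℝ))⁻¹ * (LatticeAux.Iv k n).re)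
        - (((2 * Real.pi) ^ D : ℝ))⁻¹ * (LatticeAux.Iv k (n - Pi.single j 1)).re
        - (((2 * Real.pi) ^ D : ℝ))⁻¹ * (LatticeAux.Iv k (n + Pi.single j 1)).re
      = (((2 * Real.pi) ^ D : ℝ))⁻¹ * (2 * LatticeAux.Iv k n
          - LatticeAux.Iv k (n - Pi.single j 1)
          - LatticeAux.Iv k (n + Pi.single j 1)).re := by
    intro j
    simp only [Complex.sub_re, Complex.mul_re, Complex.re_ofNat, Complex.im_ofNat]
    ring
  calc ∑ j : Fin D, (2 * ((((2 * Real.pi) ^ D : ℝ))⁻¹ * (LatticeAux.Iv k n).re)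
        - (((2 * Real.pi) ^ D : ℝ))⁻¹ * (LatticeAux.Iv k (n - Pi.single j 1)).re
        - (((2 * Real.pi) ^ D : ℝ))⁻¹ * (LatticeAux.Iv k (n + Pi.single j 1)).re)
      = ∑ j : Fin D, (((2 * Real.pi) ^ D : ℝ))⁻¹ * (2 * LatticeAux.Iv k n
          - LatticeAux.Iv k (n - Pi.single j 1)
          - LatticeAux.Iv k (n + Pi.single j 1)).re :=
        Finset.sum_congr rfl fun j _ => hL j
    _ = (((2 * Real.pi) ^ D : ℝ))⁻¹ * (∑ j : Fin D, (2 * LatticeAux.Iv k n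
          - LatticeAux.Iv k (n - Pi.single j 1)
          - LatticeAux.Iv k (n + Pi.single j 1))).re := by
        rw [← Finset.mul_sum, Complex.re_sum]
    _ = (if n = 0 then 1 else 0) - (if n = k then 1 else 0) := by
        rw [hkey, Complex.ofReal_re, ← mul_assoc, inv_mul_cancel₀ h2pi, one_mul]
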